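/- Let S be a type, φ : S → Prop a decidable guard predicate, P : S → S → ℝ≥0∞, and g : S → ℝ≥0∞. Define Φ(ν)(s) := g(s) + ∑'_{s'} (if φ(s') then ν(s') else 0)·P(s', s), a monotone map on the complete lattice of functions S → ℝ≥0∞, with least fixed point lfp Φ. Define the backward operator B : (S → ℝ≥0∞) → (S → ℝ≥0∞) by B(f)(s) := if φ(s) then ∑'_{t} P(s, t)·f(t) else 0, and the expected runtime function E(s) := ∑'_{k ∈ ℕ} (B^[k] 𝟙)(s), where 𝟙 is the constant-one function. Then the total mass of the least fixed point equals the expected runtime weighted by the initial measure: ∑'_{s} (lfp Φ)(s) = ∑'_{s} g(s)·E(s). -/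

import Mathlib

open scoped ENNReal

/-- The total mass of the occupation-measure least fixed point equals the
expected runtime (expected number of loop-guard evaluations) weighted by the
initial measure. -/
theorem lfp_mass_eq_expected_runtime {S : Type*} (φ : S → Prop) [DecidablePred φ]
    (P : S → S → ℝ≥0∞) (g : S → ℝ≥0∞)
    (Φ : (S → ℝ≥0∞) →o (S → ℝ≥0∞))
    (hΦ : ∀ ν s, Φ ν s = g s + ∑' s', (if φ s' then ν s' else 0) * P s' s)
    (B : (S → ℝ≥0∞) → (S → ℝ≥0∞))
    (hB : ∀ f s, B f s = if φ s then ∑' t, P s t * f t else 0)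
    (E : S → ℝ≥0∞)
    (hE : ∀ s, E s = ∑' k : ℕ, (B^[k] (fun _ => 1)) s) :
    ∑' s, OrderHom.lfp Φ s = ∑' s, g s * E s := by
  classical
  set T : (S → ℝ≥0∞) → (S → ℝ≥0∞) :=
    fun μ t => ∑' s, (if φ s then μ s else 0) * P s t with hT
  have hΦ' : ∀ ν s, Φ ν s = g s + T ν s := hΦ
  -- T is monotone
  have hTmono : ∀ μ ν : S → ℝ≥0∞, μ ≤ ν → ∀ t, T μ t ≤ T ν t := by
    intro μ ν h t
    refine ENNReal.tsum_le_tsum fun s => ?_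
    gcongr
    split_ifs
    · exact h s
    · exact le_rfl
  -- T commutes with countable sums
  have hTtsum : ∀ (f : ℕ → S → ℝ≥0∞) (t : S),
      T (fun s => ∑' k, f k s) t = ∑' k, T (f k) t := by
    intro f t
    simp only [hT]
    rw [← ENNReal.tsum_comm]
    congr 1
    funext s
    split_ifs with h
    · exact (ENNReal.tsum_mul_right).symm
    · simp
  -- T commutes with finite sums
  have hTsum : ∀ (n : ℕ) (f : ℕ → S → ℝ≥0∞) (t : S),
      T (fun s => ∑ k ∈ Finset.range n, f k s) t
        = ∑ k ∈ Finset.range n, T (f k) t := by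
    intro n f t
    simp only [hT]
    rw [← Summable.tsum_finsetSum (fun i _ => ENNReal.summable)]
    congr 1
    funext s
    split_ifs with h
    · rw [Finset.sum_mul]
    · simp
  -- the candidate least fixed point
  set L : S → ℝ≥0∞ := fun s => ∑' k : ℕ, (T^[k] g) s with hL
  have hfix : Φ L = L := by
    funext s
    have h2 : T L s = ∑' k : ℕ, (T^[k + 1] g) s := by
      rw [hL, hTtsum]
      congr 1
      funext k
      rw [Function.iterate_succ_apply']
    have h4 : ∑' k : ℕ, (T^[k] g) s = (T^[0] g) s + ∑' k : ℕ, (T^[k + 1] g) s :=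
      tsum_eq_zero_add' ENNReal.summable
    rw [hΦ' L s, h2]
    exact h4.symm
  have hlfp_fix : Φ (OrderHom.lfp Φ) = OrderHom.lfp Φ := OrderHom.map_lfp Φ
  -- partial sums are below the lfp
  have hpart : ∀ n s, ∑ k ∈ Finset.range n, (T^[k] g) s ≤ OrderHom.lfp Φ s := by
    intro n
    induction n with
    | zero => intro s; simp
    | succ n ih =>
      intro s
      rw [Finset.sum_range_succ']
      have h1 : ∑ k ∈ Finset.range n, (T^[k + 1] g) s
          = T (fun s => ∑ k ∈ Finset.range n, (T^[k] g) s) s := by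
        rw [hTsum]
        congr 1
        funext k
        rw [Function.iterate_succ_apply']
      calc (∑ k ∈ Finset.range n, (T^[k + 1] g) s) + (T^[0] g) s
          = T (fun s => ∑ k ∈ Finset.range n, (T^[k] g) s) s + g s := by
            rw [h1]; simp
        _ ≤ T (OrderHom.lfp Φ) s + g s :=
            add_le_add_left (hTmono _ _ (fun s => ih s) s) _
        _ = OrderHom.lfp Φ s := by
            rw [add_comm, ← hΦ' (OrderHom.lfp Φ) s]
            exact congrFun hlfp_fix s
  have hLlfp : OrderHom.lfp Φ = L := by
    apply le_antisymm
    · exact OrderHom.lfp_le Φ (le_of_eq hfix)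
    · intro s
      show (∑' k : ℕ, (T^[k] g) s) ≤ OrderHom.lfp Φ s
      rw [ENNReal.tsum_eq_iSup_nat]
      exact iSup_le fun n => hpart n s
  -- adjointness of T and B
  have hadj : ∀ (μ f : S → ℝ≥0∞), ∑' t, T μ t * f t = ∑' s, μ s * B f s := by
    intro μ f
    simp only [hT]
    calc ∑' t, (∑' s, (if φ s then μ s else 0) * P s t) * f t
        = ∑' t, ∑' s, (if φ s then μ s else 0) * (P s t * f t) := by
          congr 1; funext t
          rw [← ENNReal.tsum_mul_right]
          congr 1; funext s; ring
      _ = ∑' s, (if φ s then μ s else 0) * ∑' t, P s t * f t := by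
          rw [ENNReal.tsum_comm]
          congr 1; funext s
          rw [ENNReal.tsum_mul_left]
      _ = ∑' s, μ s * B f s := by
          congr 1; funext s
          rw [hB]
          split_ifs
          · rfl
          · simp
  have hiter : ∀ (k : ℕ) (f : S → ℝ≥0∞),
      ∑' s, (T^[k] g) s * f s = ∑' s, g s * (B^[k] f) s := by
    intro k
    induction k with
    | zero => intro f; simp [mul_comm]
    | succ k ih =>
      intro f
      calc ∑' s, (T^[k + 1] g) s * f s
          = ∑' s, T (T^[k] g) s * f s := by
            congr 1; funext s; rw [Function.iterate_succ_apply']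
        _ = ∑' s, (T^[k] g) s * B f s := hadj _ _
        _ = ∑' s, g s * (B^[k] (B f)) s := ih (B f)
        _ = ∑' s, g s * (B^[k + 1] f) s := rfl
  -- final computation
  calc ∑' s, OrderHom.lfp Φ s
      = ∑' s, ∑' k : ℕ, (T^[k] g) s := by rw [hLlfp]
    _ = ∑' k : ℕ, ∑' s, (T^[k] g) s := ENNReal.tsum_comm
    _ = ∑' k : ℕ, ∑' s, g s * (B^[k] (fun _ => 1)) s := by
        congr 1; funext k
        have := hiter k (fun _ => 1)
        simpa using this
    _ = ∑' s, ∑' k : ℕ, g s * (B^[k] (fun _ => 1)) s := ENNReal.tsum_comm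
    _ = ∑' s, g s * E s := by
        congr 1; funext s
        rw [ENNReal.tsum_mul_left, hE]
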